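/- arXiv:1204.2722 — 2 statements merged into one kernel-verified Lean document; each statement's English description precedes it below -/
import Mathlib

section
/- Let s₁ = σ₃⊗σ₁⊗σ₁⊗σ₃⊗σ₀, s₂ = σ₁⊗σ₁⊗σ₃⊗σ₀⊗σ₃, s₃ = σ₁⊗σ₃⊗σ₀⊗σ₃⊗σ₁, s₄ = σ₃⊗σ₀⊗σ₃⊗σ₁⊗σ₁, s₅ = σ₀⊗σ₃⊗σ₁⊗σ₁⊗σ₃ (the operators zxxz1, xxz1z, xz1zx, z1zxx, 1zxxz). Then (i) the matrices s₁,…,s₅ pairwise commute, and (ii) letting σ be the set of 15 five-fold Kronecker products given by all cyclic permutations of (σ₀,σ₁,σ₁,σ₁,σ₃), (σ₀,σ₃,σ₁,σ₁,σ₃), and (σ₀,σ₃,σ₁,σ₃,σ₃), and Q(ρ) = ∑_{s∈σ} (Re(trace(ρ * s)))², there exists a 32×32 density matrix ρ with Q(ρ) ≥ 5. -/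
open Matrix
open ComplexOrder

/-- The 2×2 identity matrix `σ₀`. -/
noncomputable def pauli0 : Matrix (Fin 2) (Fin 2) ℂ := 1

/-- The Pauli matrix `σ₁ = x`. -/
noncomputable def pauli1 : Matrix (Fin 2) (Fin 2) ℂ := !![0, 1; 1, 0]

/-- The Pauli matrix `σ₃ = z`. -/
noncomputable def pauli3 : Matrix (Fin 2) (Fin 2) ℂ := !![1, 0; 0, -1]

/-- The five-fold Kronecker product of single-qubit matrices, as a 32×32 matrix
indexed by `Fin 5 → Fin 2`. -/
noncomputable def kron5 (M : Fin 5 → Matrix (Fin 2) (Fin 2) ℂ) :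
    Matrix (Fin 5 → Fin 2) (Fin 5 → Fin 2) ℂ :=
  Matrix.of fun i j => ∏ m, M m (i m) (j m)

noncomputable def pA : Matrix (Fin 2) (Fin 2) ℂ := !![0, -1; 1, 0]

lemma pxx : pauli1 * pauli1 = 1 := by
  rw [pauli1]; rw [Matrix.one_fin_two]; norm_num [Matrix.mul_fin_two]
lemma pzz : pauli3 * pauli3 = 1 := by
  rw [pauli3]; rw [Matrix.one_fin_two]; norm_num [Matrix.mul_fin_two]
lemma pxz : pauli1 * pauli3 = pA := by
  rw [pauli1, pauli3, pA]; norm_num [Matrix.mul_fin_two]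
lemma pzx : pauli3 * pauli1 = -pA := by
  rw [pauli1, pauli3, pA]; norm_num [Matrix.mul_fin_two]
lemma pxA : pauli1 * pA = pauli3 := by
  rw [pauli1, pauli3, pA]; norm_num [Matrix.mul_fin_two]
lemma pAx : pA * pauli1 = -pauli3 := by
  rw [pauli1, pauli3, pA]; norm_num [Matrix.mul_fin_two]
lemma pzA : pauli3 * pA = -pauli1 := by
  rw [pauli1, pauli3, pA]; norm_num [Matrix.mul_fin_two]
lemma pAz : pA * pauli3 = pauli1 := by
  rw [pauli1, pauli3, pA]; norm_num [Matrix.mul_fin_two]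
lemma pAA : pA * pA = -1 := by
  ext i j
  fin_cases i <;> fin_cases j <;>
    simp [pA, Matrix.mul_apply, Matrix.one_apply, Fin.sum_univ_two]
lemma trx : pauli1.trace = 0 := by rw [pauli1]; simp [Matrix.trace_fin_two]
lemma trz : pauli3.trace = 0 := by rw [pauli3]; simp [Matrix.trace_fin_two]
lemma trA : pA.trace = 0 := by rw [pA]; simp [Matrix.trace_fin_two]
lemma tr1 : (1 : Matrix (Fin 2) (Fin 2) ℂ).trace = 2 := by
  simp [Matrix.trace_one]
lemma ctx : pauli1ᴴ = pauli1 := by rw [pauli1]; ext i j; fin_cases i <;> fin_cases j <;> simp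
lemma ctz : pauli3ᴴ = pauli3 := by rw [pauli3]; ext i j; fin_cases i <;> fin_cases j <;> simp

lemma kron5_mul (M N : Fin 5 → Matrix (Fin 2) (Fin 2) ℂ) :
    kron5 M * kron5 N = kron5 (fun m => M m * N m) := by
  ext i j
  simp only [kron5, Matrix.mul_apply, Matrix.of_apply]
  rw [Finset.prod_univ_sum]
  simp_rw [Fintype.piFinset_univ, ← Finset.prod_mul_distrib]

lemma kron5_trace (M : Fin 5 → Matrix (Fin 2) (Fin 2) ℂ) :
    (kron5 M).trace = ∏ m, (M m).trace := by
  simp only [Matrix.trace, Matrix.diag, kron5, Matrix.of_apply]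
  rw [Finset.prod_univ_sum]
  simp [Fintype.piFinset_univ]

lemma kron5_ct (M : Fin 5 → Matrix (Fin 2) (Fin 2) ℂ) :
    (kron5 M)ᴴ = kron5 (fun m => (M m)ᴴ) := by
  ext i j
  simp [kron5, Matrix.conjTranspose_apply, map_prod]

lemma kron5_one : kron5 (fun _ => 1) = 1 := by
  ext i j
  by_cases h : i = j
  · subst h; simp [kron5, Matrix.one_apply]
  · obtain ⟨m, hm⟩ := Function.ne_iff.mp h
    rw [Matrix.one_apply_ne h]
    simp only [kron5, Matrix.of_apply]
    exact Finset.prod_eq_zero (Finset.mem_univ m) (Matrix.one_apply_ne hm)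

lemma kron5_mul_vec (a b c d e f g h i j : Matrix (Fin 2) (Fin 2) ℂ) :
    kron5 ![a,b,c,d,e] * kron5 ![f,g,h,i,j] = kron5 ![a*f,b*g,c*h,d*i,e*j] := by
  rw [kron5_mul]; congr 1
  funext m; fin_cases m <;> rfl

lemma kron5_trace_vec (a b c d e : Matrix (Fin 2) (Fin 2) ℂ) :
    (kron5 ![a,b,c,d,e]).trace = a.trace * b.trace * c.trace * d.trace * e.trace := by
  rw [kron5_trace, Fin.prod_univ_five]; rfl

lemma kron5_ct_vec (a b c d e : Matrix (Fin 2) (Fin 2) ℂ) :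
    (kron5 ![a,b,c,d,e])ᴴ = kron5 ![aᴴ,bᴴ,cᴴ,dᴴ,eᴴ] := by
  rw [kron5_ct]; congr 1
  funext m; fin_cases m <;> rfl

lemma kron5_eq_of_smul (v w : Fin 5 → Matrix (Fin 2) (Fin 2) ℂ) (ε : Fin 5 → ℂ)
    (h : ∀ m, v m = ε m • w m) (hε : ∏ m, ε m = 1) : kron5 v = kron5 w := by
  ext i j
  simp only [kron5, Matrix.of_apply]
  calc ∏ m, v m (i m) (j m) = ∏ m, ε m * w m (i m) (j m) := by
        refine Finset.prod_congr rfl fun m _ => ?_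
        rw [h m]; simp
    _ = (∏ m, ε m) * ∏ m, w m (i m) (j m) := Finset.prod_mul_distrib
    _ = ∏ m, w m (i m) (j m) := by rw [hε, one_mul]

lemma p0 : pauli0 = 1 := rfl

lemma c12 : kron5 ![pauli3, pauli1, pauli1, pauli3, pauli0] * kron5 ![pauli1, pauli1, pauli3, pauli0, pauli3] = kron5 ![pauli1, pauli1, pauli3, pauli0, pauli3] * kron5 ![pauli3, pauli1, pauli1, pauli3, pauli0] := by
  rw [kron5_mul_vec, kron5_mul_vec]
  simp only [p0, one_mul, mul_one, pxx, pzz, pxz, pzx]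
  exact kron5_eq_of_smul _ _ ![(-1:ℂ), (1:ℂ), (-1:ℂ), (1:ℂ), (1:ℂ)] (by intro m; fin_cases m <;> simp) (by simp [Fin.prod_univ_five])

lemma c13 : kron5 ![pauli3, pauli1, pauli1, pauli3, pauli0] * kron5 ![pauli1, pauli3, pauli0, pauli3, pauli1] = kron5 ![pauli1, pauli3, pauli0, pauli3, pauli1] * kron5 ![pauli3, pauli1, pauli1, pauli3, pauli0] := by
  rw [kron5_mul_vec, kron5_mul_vec]
  simp only [p0, one_mul, mul_one, pxx, pzz, pxz, pzx]
  exact kron5_eq_of_smul _ _ ![(-1:ℂ), (-1:ℂ), (1:ℂ), (1:ℂ), (1:ℂ)] (by intro m; fin_cases m <;> simp) (by simp [Fin.prod_univ_five])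

lemma c14 : kron5 ![pauli3, pauli1, pauli1, pauli3, pauli0] * kron5 ![pauli3, pauli0, pauli3, pauli1, pauli1] = kron5 ![pauli3, pauli0, pauli3, pauli1, pauli1] * kron5 ![pauli3, pauli1, pauli1, pauli3, pauli0] := by
  rw [kron5_mul_vec, kron5_mul_vec]
  simp only [p0, one_mul, mul_one, pxx, pzz, pxz, pzx]
  exact kron5_eq_of_smul _ _ ![(1:ℂ), (1:ℂ), (-1:ℂ), (-1:ℂ), (1:ℂ)] (by intro m; fin_cases m <;> simp) (by simp [Fin.prod_univ_five])

lemma c15 : kron5 ![pauli3, pauli1, pauli1, pauli3, pauli0] * kron5 ![pauli0, pauli3, pauli1, pauli1, pauli3] = kron5 ![pauli0, pauli3, pauli1, pauli1, pauli3] * kron5 ![pauli3, pauli1, pauli1, pauli3, pauli0] := by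
  rw [kron5_mul_vec, kron5_mul_vec]
  simp only [p0, one_mul, mul_one, pxx, pzz, pxz, pzx]
  exact kron5_eq_of_smul _ _ ![(1:ℂ), (-1:ℂ), (1:ℂ), (-1:ℂ), (1:ℂ)] (by intro m; fin_cases m <;> simp) (by simp [Fin.prod_univ_five])

lemma c23 : kron5 ![pauli1, pauli1, pauli3, pauli0, pauli3] * kron5 ![pauli1, pauli3, pauli0, pauli3, pauli1] = kron5 ![pauli1, pauli3, pauli0, pauli3, pauli1] * kron5 ![pauli1, pauli1, pauli3, pauli0, pauli3] := by
  rw [kron5_mul_vec, kron5_mul_vec]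
  simp only [p0, one_mul, mul_one, pxx, pzz, pxz, pzx]
  exact kron5_eq_of_smul _ _ ![(1:ℂ), (-1:ℂ), (1:ℂ), (1:ℂ), (-1:ℂ)] (by intro m; fin_cases m <;> simp) (by simp [Fin.prod_univ_five])

lemma c24 : kron5 ![pauli1, pauli1, pauli3, pauli0, pauli3] * kron5 ![pauli3, pauli0, pauli3, pauli1, pauli1] = kron5 ![pauli3, pauli0, pauli3, pauli1, pauli1] * kron5 ![pauli1, pauli1, pauli3, pauli0, pauli3] := by
  rw [kron5_mul_vec, kron5_mul_vec]
  simp only [p0, one_mul, mul_one, pxx, pzz, pxz, pzx]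
  exact kron5_eq_of_smul _ _ ![(-1:ℂ), (1:ℂ), (1:ℂ), (1:ℂ), (-1:ℂ)] (by intro m; fin_cases m <;> simp) (by simp [Fin.prod_univ_five])

lemma c25 : kron5 ![pauli1, pauli1, pauli3, pauli0, pauli3] * kron5 ![pauli0, pauli3, pauli1, pauli1, pauli3] = kron5 ![pauli0, pauli3, pauli1, pauli1, pauli3] * kron5 ![pauli1, pauli1, pauli3, pauli0, pauli3] := by
  rw [kron5_mul_vec, kron5_mul_vec]
  simp only [p0, one_mul, mul_one, pxx, pzz, pxz, pzx]
  exact kron5_eq_of_smul _ _ ![(1:ℂ), (-1:ℂ), (-1:ℂ), (1:ℂ), (1:ℂ)] (by intro m; fin_cases m <;> simp) (by simp [Fin.prod_univ_five])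

lemma c34 : kron5 ![pauli1, pauli3, pauli0, pauli3, pauli1] * kron5 ![pauli3, pauli0, pauli3, pauli1, pauli1] = kron5 ![pauli3, pauli0, pauli3, pauli1, pauli1] * kron5 ![pauli1, pauli3, pauli0, pauli3, pauli1] := by
  rw [kron5_mul_vec, kron5_mul_vec]
  simp only [p0, one_mul, mul_one, pxx, pzz, pxz, pzx]
  exact kron5_eq_of_smul _ _ ![(-1:ℂ), (1:ℂ), (1:ℂ), (-1:ℂ), (1:ℂ)] (by intro m; fin_cases m <;> simp) (by simp [Fin.prod_univ_five])

lemma c35 : kron5 ![pauli1, pauli3, pauli0, pauli3, pauli1] * kron5 ![pauli0, pauli3, pauli1, pauli1, pauli3] = kron5 ![pauli0, pauli3, pauli1, pauli1, pauli3] * kron5 ![pauli1, pauli3, pauli0, pauli3, pauli1] := by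
  rw [kron5_mul_vec, kron5_mul_vec]
  simp only [p0, one_mul, mul_one, pxx, pzz, pxz, pzx]
  exact kron5_eq_of_smul _ _ ![(1:ℂ), (1:ℂ), (1:ℂ), (-1:ℂ), (-1:ℂ)] (by intro m; fin_cases m <;> simp) (by simp [Fin.prod_univ_five])

lemma c45 : kron5 ![pauli3, pauli0, pauli3, pauli1, pauli1] * kron5 ![pauli0, pauli3, pauli1, pauli1, pauli3] = kron5 ![pauli0, pauli3, pauli1, pauli1, pauli3] * kron5 ![pauli3, pauli0, pauli3, pauli1, pauli1] := by
  rw [kron5_mul_vec, kron5_mul_vec]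
  simp only [p0, one_mul, mul_one, pxx, pzz, pxz, pzx]
  exact kron5_eq_of_smul _ _ ![(1:ℂ), (1:ℂ), (-1:ℂ), (1:ℂ), (-1:ℂ)] (by intro m; fin_cases m <;> simp) (by simp [Fin.prod_univ_five])

noncomputable def g1 := kron5 ![pauli3, pauli1, pauli1, pauli3, pauli0]
noncomputable def g2 := kron5 ![pauli1, pauli1, pauli3, pauli0, pauli3]
noncomputable def g3 := kron5 ![pauli1, pauli3, pauli0, pauli3, pauli1]
noncomputable def g4 := kron5 ![pauli3, pauli0, pauli3, pauli1, pauli1]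
noncomputable def g5 := kron5 ![pauli0, pauli3, pauli1, pauli1, pauli3]

lemma kron5_one_vec : kron5 ![1,1,1,1,1] = 1 := by
  rw [show ![(1 : Matrix (Fin 2) (Fin 2) ℂ),1,1,1,1] = fun _ => 1 by
    funext m; fin_cases m <;> rfl]
  exact kron5_one

lemma sq1 : g1 * g1 = 1 := by
  rw [g1, kron5_mul_vec]; simp only [p0, pxx, pzz, one_mul]; exact kron5_one_vec
lemma sq2 : g2 * g2 = 1 := by
  rw [g2, kron5_mul_vec]; simp only [p0, pxx, pzz, one_mul]; exact kron5_one_vec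
lemma sq3 : g3 * g3 = 1 := by
  rw [g3, kron5_mul_vec]; simp only [p0, pxx, pzz, one_mul]; exact kron5_one_vec
lemma sq4 : g4 * g4 = 1 := by
  rw [g4, kron5_mul_vec]; simp only [p0, pxx, pzz, one_mul]; exact kron5_one_vec
lemma sq5 : g5 * g5 = 1 := by
  rw [g5, kron5_mul_vec]; simp only [p0, pxx, pzz, one_mul]; exact kron5_one_vec

lemma trP : ((1+g1)*(1+g2)*(1+g3)*(1+g4)*(1+g5)).trace = 64 := by
  simp only [g1, g2, g3, g4, g5, add_mul, mul_add, one_mul, mul_one, Matrix.trace_add,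
    kron5_mul_vec, p0, pxx, pzz, pxz, pzx, pxA, pAx, pzA, pAz, pAA,
    neg_mul, mul_neg, neg_neg, kron5_trace_vec, Matrix.trace_neg,
    trx, trz, trA, tr1, Matrix.trace_one]
  norm_num

lemma trPg1 : ((1+g1)*(1+g2)*(1+g3)*(1+g4)*(1+g5) * g1).trace = 64 := by
  simp only [g1, g2, g3, g4, g5, add_mul, mul_add, one_mul, mul_one, Matrix.trace_add,
    kron5_mul_vec, p0, pxx, pzz, pxz, pzx, pxA, pAx, pzA, pAz, pAA,
    neg_mul, mul_neg, neg_neg, kron5_trace_vec, Matrix.trace_neg,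
    trx, trz, trA, tr1, Matrix.trace_one]
  norm_num

lemma trPg2 : ((1+g1)*(1+g2)*(1+g3)*(1+g4)*(1+g5) * g2).trace = 64 := by
  simp only [g1, g2, g3, g4, g5, add_mul, mul_add, one_mul, mul_one, Matrix.trace_add,
    kron5_mul_vec, p0, pxx, pzz, pxz, pzx, pxA, pAx, pzA, pAz, pAA,
    neg_mul, mul_neg, neg_neg, kron5_trace_vec, Matrix.trace_neg,
    trx, trz, trA, tr1, Matrix.trace_one]
  norm_num

lemma trPg3 : ((1+g1)*(1+g2)*(1+g3)*(1+g4)*(1+g5) * g3).trace = 64 := by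
  simp only [g1, g2, g3, g4, g5, add_mul, mul_add, one_mul, mul_one, Matrix.trace_add,
    kron5_mul_vec, p0, pxx, pzz, pxz, pzx, pxA, pAx, pzA, pAz, pAA,
    neg_mul, mul_neg, neg_neg, kron5_trace_vec, Matrix.trace_neg,
    trx, trz, trA, tr1, Matrix.trace_one]
  norm_num

lemma trPg4 : ((1+g1)*(1+g2)*(1+g3)*(1+g4)*(1+g5) * g4).trace = 64 := by
  simp only [g1, g2, g3, g4, g5, add_mul, mul_add, one_mul, mul_one, Matrix.trace_add,
    kron5_mul_vec, p0, pxx, pzz, pxz, pzx, pxA, pAx, pzA, pAz, pAA,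
    neg_mul, mul_neg, neg_neg, kron5_trace_vec, Matrix.trace_neg,
    trx, trz, trA, tr1, Matrix.trace_one]
  norm_num

lemma trPg5 : ((1+g1)*(1+g2)*(1+g3)*(1+g4)*(1+g5) * g5).trace = 64 := by
  simp only [g1, g2, g3, g4, g5, add_mul, mul_add, one_mul, mul_one, Matrix.trace_add,
    kron5_mul_vec, p0, pxx, pzz, pxz, pzx, pxA, pAx, pzA, pAz, pAA,
    neg_mul, mul_neg, neg_neg, kron5_trace_vec, Matrix.trace_neg,
    trx, trz, trA, tr1, Matrix.trace_one]
  norm_num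

lemma psd_smul {n : Type*} [Fintype n] {M : Matrix n n ℂ} (hM : M.PosSemidef)
    {c : ℝ} (hc : 0 ≤ c) : ((c : ℂ) • M).PosSemidef := by
  refine Matrix.PosSemidef.of_dotProduct_mulVec_nonneg ?_ fun x => ?_
  · have h1 := hM.1
    unfold Matrix.IsHermitian at *
    rw [Matrix.conjTranspose_smul, h1]
    congr 1
    simp [Complex.star_def, Complex.conj_ofReal]
  · rw [Matrix.smul_mulVec, dotProduct_smul, smul_eq_mul]
    exact mul_nonneg (Complex.zero_le_real.mpr hc) (hM.dotProduct_mulVec_nonneg x)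

lemma idem_mul {R : Type*} [Ring R] {p v : R} (hp : p*p = p) (hv : v*v = v)
    (h : Commute p v) : (p*v)*(p*v) = p*v := by
  calc (p*v)*(p*v) = p*((v*p)*v) := by rw [mul_assoc, ← mul_assoc v p v]
    _ = p*((p*v)*v) := by rw [← h.eq]
    _ = (p*p)*(v*v) := by rw [mul_assoc p v v, ← mul_assoc]
    _ = p*v := by rw [hp, hv]

noncomputable def aa (g : Matrix (Fin 5 → Fin 2) (Fin 5 → Fin 2) ℂ) :
    Matrix (Fin 5 → Fin 2) (Fin 5 → Fin 2) ℂ := (1/2 : ℂ) • (1 + g)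

lemma aa_sq {g : Matrix (Fin 5 → Fin 2) (Fin 5 → Fin 2) ℂ} (hg : g * g = 1) :
    aa g * aa g = aa g := by
  have h : (1+g)*(1+g) = (2:ℂ) • (1+g) := by
    rw [mul_add, mul_one, add_mul, one_mul, hg]; module
  rw [aa, smul_mul_assoc, mul_smul_comm, h, smul_smul, smul_smul]; norm_num

lemma aa_comm {g h : Matrix (Fin 5 → Fin 2) (Fin 5 → Fin 2) ℂ} (hc : Commute g h) :
    Commute (aa g) (aa h) := by
  unfold aa
  exact (((Commute.one_left (1+h)).add_left ((Commute.one_right g).add_right hc)).smul_left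
    _).smul_right _

lemma aa_herm {g : Matrix (Fin 5 → Fin 2) (Fin 5 → Fin 2) ℂ} (hg : gᴴ = g) :
    (aa g)ᴴ = aa g := by
  rw [aa, Matrix.conjTranspose_smul, Matrix.conjTranspose_add, Matrix.conjTranspose_one, hg]
  congr 1
  simp [Complex.star_def]

lemma ctg1 : g1ᴴ = g1 := by
  rw [g1, kron5_ct_vec]; simp only [p0, Matrix.conjTranspose_one, ctx, ctz]
lemma ctg2 : g2ᴴ = g2 := by
  rw [g2, kron5_ct_vec]; simp only [p0, Matrix.conjTranspose_one, ctx, ctz]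
lemma ctg3 : g3ᴴ = g3 := by
  rw [g3, kron5_ct_vec]; simp only [p0, Matrix.conjTranspose_one, ctx, ctz]
lemma ctg4 : g4ᴴ = g4 := by
  rw [g4, kron5_ct_vec]; simp only [p0, Matrix.conjTranspose_one, ctx, ctz]
lemma ctg5 : g5ᴴ = g5 := by
  rw [g5, kron5_ct_vec]; simp only [p0, Matrix.conjTranspose_one, ctx, ctz]

lemma hc12 : Commute g1 g2 := c12
lemma hc13 : Commute g1 g3 := c13
lemma hc14 : Commute g1 g4 := c14
lemma hc15 : Commute g1 g5 := c15
lemma hc23 : Commute g2 g3 := c23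
lemma hc24 : Commute g2 g4 := c24
lemma hc25 : Commute g2 g5 := c25
lemma hc34 : Commute g3 g4 := c34
lemma hc35 : Commute g3 g5 := c35
lemma hc45 : Commute g4 g5 := c45

noncomputable def piP : Matrix (Fin 5 → Fin 2) (Fin 5 → Fin 2) ℂ :=
  aa g1 * aa g2 * aa g3 * aa g4 * aa g5

lemma piP_eq : piP = (1/32 : ℂ) • ((1+g1)*(1+g2)*(1+g3)*(1+g4)*(1+g5)) := by
  rw [piP, aa, aa, aa, aa, aa]
  simp only [smul_mul_assoc, mul_smul_comm, smul_smul]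
  norm_num

lemma piP_idem : piP * piP = piP := by
  rw [piP]
  exact idem_mul
    (idem_mul
      (idem_mul
        (idem_mul (aa_sq sq1) (aa_sq sq2) (aa_comm hc12))
        (aa_sq sq3) (Commute.mul_left (aa_comm hc13) (aa_comm hc23)))
      (aa_sq sq4)
      (Commute.mul_left (Commute.mul_left (aa_comm hc14) (aa_comm hc24)) (aa_comm hc34)))
    (aa_sq sq5)
    (Commute.mul_left
      (Commute.mul_left (Commute.mul_left (aa_comm hc15) (aa_comm hc25)) (aa_comm hc35))
      (aa_comm hc45))

lemma piP_herm : piPᴴ = piP := by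
  rw [piP]
  simp only [Matrix.conjTranspose_mul, aa_herm ctg1, aa_herm ctg2, aa_herm ctg3,
    aa_herm ctg4, aa_herm ctg5]
  rw [← (aa_comm hc12).eq,
      ← ((aa_comm hc13).mul_left (aa_comm hc23)).eq,
      ← (((aa_comm hc14).mul_left (aa_comm hc24)).mul_left (aa_comm hc34)).eq,
      ← ((((aa_comm hc15).mul_left (aa_comm hc25)).mul_left (aa_comm hc35)).mul_left
          (aa_comm hc45)).eq]

lemma piP_psd : piP.PosSemidef := by
  have h := Matrix.posSemidef_conjTranspose_mul_self piP
  rwa [piP_herm, piP_idem] at h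

/-- The three base words `1xxxz`, `1zxxz`, `1zxzz`. -/
noncomputable def baseWord : Fin 3 → Fin 5 → Matrix (Fin 2) (Fin 2) ℂ
  | 0 => ![pauli0, pauli1, pauli1, pauli1, pauli3]
  | 1 => ![pauli0, pauli3, pauli1, pauli1, pauli3]
  | 2 => ![pauli0, pauli3, pauli1, pauli3, pauli3]

/-- The element of σ obtained as the `k`-th cyclic permutation of the `w`-th base
word; as `w` ranges over `Fin 3` and `k` over `Fin 5` this enumerates the 15
(pairwise distinct) elements of σ = CP(1xxxz) ∪ CP(1zxxz) ∪ CP(1zxzz). -/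
noncomputable def sigmaOp (w : Fin 3) (k : Fin 5) :
    Matrix (Fin 5 → Fin 2) (Fin 5 → Fin 2) ℂ :=
  kron5 (fun m => baseWord w (m + k))

lemma sig0 : sigmaOp 1 0 = g5 := by
  rw [sigmaOp, g5]; congr 1
  funext m; fin_cases m <;> rfl
lemma sig1 : sigmaOp 1 1 = g1 := by
  rw [sigmaOp, g1]; congr 1
  funext m; fin_cases m <;> rfl
lemma sig2 : sigmaOp 1 2 = g2 := by
  rw [sigmaOp, g2]; congr 1
  funext m; fin_cases m <;> rfl
lemma sig3 : sigmaOp 1 3 = g3 := by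
  rw [sigmaOp, g3]; congr 1
  funext m; fin_cases m <;> rfl
lemma sig4 : sigmaOp 1 4 = g4 := by
  rw [sigmaOp, g4]; congr 1
  funext m; fin_cases m <;> rfl

/-- `Q(ρ) = ∑_{s ∈ σ} (Re tr(ρ s))²`. -/
noncomputable def Q (ρ : Matrix (Fin 5 → Fin 2) (Fin 5 → Fin 2) ℂ) : ℝ :=
  ∑ w : Fin 3, ∑ k : Fin 5, ((ρ * sigmaOp w k).trace.re) ^ 2

/-- A density matrix: positive semidefinite with trace 1. -/
def IsDensityMatrix {n : Type*} [Fintype n] [DecidableEq n]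
    (ρ : Matrix n n ℂ) : Prop :=
  ρ.PosSemidef ∧ ρ.trace = 1

/-- (i) The five operators `zxxz1`, `xxz1z`, `xz1zx`, `z1zxx`, `1zxxz` pairwise
commute, and (ii) there is a 5-qubit density matrix with `Q(ρ) ≥ 5`. -/
theorem clique_five_and_Q_ge_five :
    (∀ s ∈ [kron5 ![pauli3, pauli1, pauli1, pauli3, pauli0],
            kron5 ![pauli1, pauli1, pauli3, pauli0, pauli3],
            kron5 ![pauli1, pauli3, pauli0, pauli3, pauli1],
            kron5 ![pauli3, pauli0, pauli3, pauli1, pauli1],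
            kron5 ![pauli0, pauli3, pauli1, pauli1, pauli3]],
      ∀ t ∈ [kron5 ![pauli3, pauli1, pauli1, pauli3, pauli0],
             kron5 ![pauli1, pauli1, pauli3, pauli0, pauli3],
             kron5 ![pauli1, pauli3, pauli0, pauli3, pauli1],
             kron5 ![pauli3, pauli0, pauli3, pauli1, pauli1],
             kron5 ![pauli0, pauli3, pauli1, pauli1, pauli3]],
        s * t = t * s) ∧
    (∃ ρ : Matrix (Fin 5 → Fin 2) (Fin 5 → Fin 2) ℂ,
      IsDensityMatrix ρ ∧ 5 ≤ Q ρ) := by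
  constructor
  · intro s hs t ht
    simp only [List.mem_cons, List.not_mem_nil, or_false] at hs ht
    rcases hs with rfl|rfl|rfl|rfl|rfl
    · rcases ht with rfl|rfl|rfl|rfl|rfl
      exacts [rfl, c12, c13, c14, c15]
    · rcases ht with rfl|rfl|rfl|rfl|rfl
      exacts [c12.symm, rfl, c23, c24, c25]
    · rcases ht with rfl|rfl|rfl|rfl|rfl
      exacts [c13.symm, c23.symm, rfl, c34, c35]
    · rcases ht with rfl|rfl|rfl|rfl|rfl
      exacts [c14.symm, c24.symm, c34.symm, rfl, c45]
    · rcases ht with rfl|rfl|rfl|rfl|rfl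
      exacts [c15.symm, c25.symm, c35.symm, c45.symm, rfl]
  · refine ⟨(1/64 : ℂ) • ((1+g1)*(1+g2)*(1+g3)*(1+g4)*(1+g5)), ⟨?_, ?_⟩, ?_⟩
    · have h : (1/64 : ℂ) • ((1+g1)*(1+g2)*(1+g3)*(1+g4)*(1+g5))
          = (((1/2 : ℝ) : ℂ)) • piP := by
        rw [piP_eq, smul_smul]; norm_num
      rw [h]
      exact psd_smul piP_psd (by norm_num)
    · rw [Matrix.trace_smul, trP, smul_eq_mul]; norm_num
    · have key : ∀ g, ((1+g1)*(1+g2)*(1+g3)*(1+g4)*(1+g5) * g).trace = 64 →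
          (((1/64 : ℂ) • ((1+g1)*(1+g2)*(1+g3)*(1+g4)*(1+g5)) * g).trace).re = 1 := by
        intro g hg
        rw [Matrix.smul_mul, Matrix.trace_smul, hg, smul_eq_mul]
        norm_num
      rw [Q, Fin.sum_univ_three]
      have hmid : ∑ k : Fin 5,
          (((1/64 : ℂ) • ((1+g1)*(1+g2)*(1+g3)*(1+g4)*(1+g5)) * sigmaOp 1 k).trace.re) ^ 2
          = 5 := by
        rw [Fin.sum_univ_five, sig0, sig1, sig2, sig3, sig4,
          key g5 trPg5, key g1 trPg1, key g2 trPg2, key g3 trPg3, key g4 trPg4]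
        norm_num
      have h0 : (0:ℝ) ≤ ∑ k : Fin 5,
          (((1/64 : ℂ) • ((1+g1)*(1+g2)*(1+g3)*(1+g4)*(1+g5)) * sigmaOp 0 k).trace.re) ^ 2 :=
        Finset.sum_nonneg fun _ _ => sq_nonneg _
      have h2 : (0:ℝ) ≤ ∑ k : Fin 5,
          (((1/64 : ℂ) • ((1+g1)*(1+g2)*(1+g3)*(1+g4)*(1+g5)) * sigmaOp 2 k).trace.re) ^ 2 :=
        Finset.sum_nonneg fun _ _ => sq_nonneg _
      linarith [hmid, h0, h2]
end

section
/- Let σ₃-set = {x⊗x⊗x, y⊗x⊗x, x⊗y⊗x, y⊗y⊗x, x⊗x⊗y, y⊗x⊗y, x⊗y⊗y, y⊗y⊗y} be the 8 three-fold Kronecker products of x = σ₁ and y = σ₂, and for an 8×8 density matrix ρ define Q(ρ) = ∑_{s∈σ₃-set} (Re(trace(ρ * s)))². Then for every 3-qubit state separable with respect to the cut (A|BC) — i.e., every ρ = ∑_k p_k • (ρ_k^A ⊗ ρ_k^{BC}) with p_k ≥ 0, ∑_k p_k = 1, ρ_k^A a 2×2 density matrix, and ρ_k^{BC} a 4×4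 density matrix — one has Q(ρ) ≤ 2. -/
open Matrix
open ComplexOrder

/-- The Pauli matrix `x = σ₁`. -/
noncomputable def pauliX : Matrix (Fin 2) (Fin 2) ℂ := !![0, 1; 1, 0]

/-- The Pauli matrix `y = σ₂`. -/
noncomputable def pauliY : Matrix (Fin 2) (Fin 2) ℂ := !![0, -Complex.I; Complex.I, 0]

/-- `![x, y]`: chooses `x` or `y`. -/
noncomputable def xy : Fin 2 → Matrix (Fin 2) (Fin 2) ℂ := ![pauliX, pauliY]

/-- The three-fold Kronecker product of single-qubit matrices, as an 8×8 matrix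
indexed by `Fin 3 → Fin 2`. -/
noncomputable def kron3 (M : Fin 3 → Matrix (Fin 2) (Fin 2) ℂ) :
    Matrix (Fin 3 → Fin 2) (Fin 3 → Fin 2) ℂ :=
  Matrix.of fun i j => ∏ m, M m (i m) (j m)

/-- `Q(ρ) = ∑_{s ∈ σ} (Re tr(ρ s))²`, where σ is the set of the 8 (pairwise
distinct) three-fold tensor products of `x` and `y`:
`{xxx, yxx, xyx, yyx, xxy, yxy, xyy, yyy}`. -/
noncomputable def Q3 (ρ : Matrix (Fin 3 → Fin 2) (Fin 3 → Fin 2) ℂ) : ℝ :=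
  ∑ f : Fin 3 → Fin 2, ((ρ * kron3 (fun m => xy (f m))).trace.re) ^ 2

/-! ### Auxiliary definitions and lemmas -/

noncomputable def pauliZ : Matrix (Fin 2) (Fin 2) ℂ := !![1, 0; 0, -1]

/-- The two-fold Kronecker product of single-qubit matrices. -/
noncomputable def kron2 (M : Fin 2 → Matrix (Fin 2) (Fin 2) ℂ) :
    Matrix (Fin 2 → Fin 2) (Fin 2 → Fin 2) ℂ :=
  Matrix.of fun i j => M 0 (i 0) (j 0) * M 1 (i 1) (j 1)

lemma sum_pi2 {M : Type*} [AddCommMonoid M] (F : (Fin 2 → Fin 2) → M) :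
    ∑ g, F g = F ![0,0] + F ![0,1] + F ![1,0] + F ![1,1] := by
  have h : (Finset.univ : Finset (Fin 2 → Fin 2)) = {![0,0], ![0,1], ![1,0], ![1,1]} := by
    decide
  rw [h, Finset.sum_insert (by decide), Finset.sum_insert (by decide),
    Finset.sum_insert (by decide), Finset.sum_singleton, add_assoc, add_assoc]

lemma sum_pi3 {M : Type*} [AddCommMonoid M] (F : (Fin 3 → Fin 2) → M) :
    ∑ g, F g = F ![0,0,0] + F ![0,0,1] + F ![0,1,0] + F ![0,1,1] +
      F ![1,0,0] + F ![1,0,1] + F ![1,1,0] + F ![1,1,1] := by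
  have h : (Finset.univ : Finset (Fin 3 → Fin 2)) = {![0,0,0], ![0,0,1], ![0,1,0], ![0,1,1],
      ![1,0,0], ![1,0,1], ![1,1,0], ![1,1,1]} := by decide
  rw [h]
  rw [Finset.sum_insert (by decide), Finset.sum_insert (by decide),
    Finset.sum_insert (by decide), Finset.sum_insert (by decide),
    Finset.sum_insert (by decide), Finset.sum_insert (by decide),
    Finset.sum_insert (by decide), Finset.sum_singleton]
  abel

lemma pi2_cases (i : Fin 2 → Fin 2) :
    i = ![0,0] ∨ i = ![0,1] ∨ i = ![1,0] ∨ i = ![1,1] := by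
  revert i; decide

@[simp] lemma tail3 (a b c : Fin 2) :
    (fun m : Fin 2 => (![a, b, c] : Fin 3 → Fin 2) m.succ) = ![b, c] := by
  funext m; fin_cases m <;> rfl

lemma xy_conj (u a b : Fin 2) : star (xy u a b) = xy u b a := by
  fin_cases u <;> fin_cases a <;> fin_cases b <;> simp [xy, pauliX, pauliY]

lemma xy_herm (u : Fin 2) : (xy u)ᴴ = xy u := by
  ext a b; rw [conjTranspose_apply, xy_conj]

lemma Sg_herm (g : Fin 2 → Fin 2) :
    (kron2 fun m => xy (g m))ᴴ = kron2 fun m => xy (g m) := by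
  ext i j
  simp [kron2, conjTranspose_apply, star_mul', xy_conj]

lemma trace_herm_re {n : Type*} [Fintype n] (A B : Matrix n n ℂ)
    (hA : Aᴴ = A) (hB : Bᴴ = B) :
    (A * B).trace = (((A * B).trace.re : ℝ) : ℂ) := by
  have h : (starRingEnd ℂ) ((A * B).trace) = (A * B).trace := by
    calc (starRingEnd ℂ) ((A * B).trace) = ((A * B)ᴴ).trace := (trace_conjTranspose _).symm
      _ = (Bᴴ * Aᴴ).trace := by rw [conjTranspose_mul]
      _ = (B * A).trace := by rw [hA, hB]
      _ = (A * B).trace := trace_mul_comm _ _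
  exact (Complex.conj_eq_iff_re.mp h).symm

lemma diag_re_nonneg {n : Type*} [Fintype n] [DecidableEq n] {A : Matrix n n ℂ}
    (hA : A.PosSemidef) (i : n) : 0 ≤ (A i i).re := by
  have h := hA.re_dotProduct_nonneg (Pi.single i 1)
  simpa [dotProduct, Matrix.mulVec, Pi.single_apply, mul_ite, ite_mul,
    Finset.sum_ite_eq, Finset.sum_ite_eq'] using h

lemma trace_mul_conj_nonneg {n : Type*} [Fintype n] [DecidableEq n] {A : Matrix n n ℂ}
    (hA : A.PosSemidef) (B : Matrix n n ℂ) : 0 ≤ ((A * (Bᴴ * B)).trace).re := by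
  have h : (A * (Bᴴ * B)).trace = (B * A * Bᴴ).trace := by
    rw [trace_mul_comm, Matrix.mul_assoc, trace_mul_comm]
  have hP : (B * A * Bᴴ).PosSemidef := hA.mul_mul_conjTranspose_same B
  rw [h, Matrix.trace, Complex.re_sum]
  exact Finset.sum_nonneg fun i _ => diag_re_nonneg hP i

set_option maxHeartbeats 1000000 in
lemma pauli2_sq (c : (Fin 2 → Fin 2) → ℂ) :
    (∑ g, c g • kron2 fun m => xy (g m)) * (∑ g, c g • kron2 fun m => xy (g m)) =
      (∑ g, (c g) ^ 2) • (1 : Matrix (Fin 2 → Fin 2) (Fin 2 → Fin 2) ℂ)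
      + (2 * (c ![0,1] * c ![1,0] - c ![0,0] * c ![1,1])) • kron2 ![pauliZ, pauliZ] := by
  ext i j
  rcases pi2_cases i with rfl | rfl | rfl | rfl <;>
    rcases pi2_cases j with rfl | rfl | rfl | rfl <;>
  · simp only [Matrix.mul_apply, Matrix.sum_apply, Matrix.smul_apply, Matrix.add_apply,
      Matrix.one_apply, sum_pi2, kron2, Matrix.of_apply, xy, pauliX, pauliY, pauliZ,
      smul_eq_mul]
    norm_num [Matrix.cons_val_zero, Matrix.cons_val_one, Matrix.head_cons]
    try rw [if_neg (by decide)]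
    try rw [if_pos (by decide)]
    try ring_nf
    try simp [Complex.I_sq]
    try ring

set_option maxHeartbeats 1000000 in
lemma trace_mul_kron3 (A : Matrix (Fin 2) (Fin 2) ℂ)
    (B : Matrix (Fin 2 → Fin 2) (Fin 2 → Fin 2) ℂ) (M : Fin 3 → Matrix (Fin 2) (Fin 2) ℂ) :
    ((Matrix.of fun i j : Fin 3 → Fin 2 =>
        A (i 0) (j 0) * B (fun m => i m.succ) (fun m => j m.succ)) * kron3 M).trace
      = (A * M 0).trace * (B * kron2 fun m => M m.succ).trace := by
  simp only [Matrix.trace, Matrix.diag, Matrix.mul_apply, Matrix.of_apply, kron3, kron2,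
    sum_pi3, sum_pi2, Fin.sum_univ_two, Fin.prod_univ_three, tail3,
    Matrix.cons_val_zero, Matrix.cons_val_one, Matrix.head_cons,
    Fin.succ_zero_eq_one, Fin.succ_one_eq_two, Matrix.cons_val_two]
  norm_num
  ring

lemma lemA {σ : Matrix (Fin 2) (Fin 2) ℂ} (hσ : σ.PosSemidef) (htr : σ.trace = 1) :
    ((σ * pauliX).trace.re) ^ 2 + ((σ * pauliY).trace.re) ^ 2 ≤ 1 := by
  have hherm := hσ.isHermitian
  have h10 : σ 1 0 = (starRingEnd ℂ) (σ 0 1) := (hherm.apply 1 0).symm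
  have h00 : (σ 0 0).im = 0 := by
    have := hherm.apply 0 0
    rw [Complex.star_def, Complex.conj_eq_iff_im] at this; exact this
  have h11 : (σ 1 1).im = 0 := by
    have := hherm.apply 1 1
    rw [Complex.star_def, Complex.conj_eq_iff_im] at this; exact this
  have htr' : (σ 0 0).re + (σ 1 1).re = 1 := by
    have : (σ.trace).re = 1 := by rw [htr]; norm_num
    simpa [Matrix.trace, Fin.sum_univ_two] using this
  have hd0 : 0 ≤ (σ 0 0).re := diag_re_nonneg hσ 0
  have hd1 : 0 ≤ (σ 1 1).re := diag_re_nonneg hσ 1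
  have key : ∀ t : ℝ, 0 ≤ t ^ 2 * (((σ 0 1).re ^ 2 + (σ 0 1).im ^ 2) * (σ 0 0).re)
      - 2 * t * ((σ 0 1).re ^ 2 + (σ 0 1).im ^ 2) + (σ 1 1).re := by
    intro t
    have h := hσ.re_dotProduct_nonneg ![-(t : ℂ) * σ 0 1, 1]
    have e : RCLike.re (dotProduct (star ![-(t : ℂ) * σ 0 1, 1]) (σ *ᵥ ![-(t : ℂ) * σ 0 1, 1]))
        = t ^ 2 * (((σ 0 1).re ^ 2 + (σ 0 1).im ^ 2) * (σ 0 0).re)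
          - 2 * t * ((σ 0 1).re ^ 2 + (σ 0 1).im ^ 2) + (σ 1 1).re := by
      simp only [dotProduct, Matrix.mulVec, Fin.sum_univ_two, Matrix.cons_val_zero,
        Matrix.cons_val_one, Matrix.head_cons, Pi.star_apply, RCLike.re_to_complex, h10]
      simp [Complex.add_re, Complex.mul_re, Complex.mul_im, h00, h11]
      ring
    rw [e] at h; exact h
  have hX : (σ * pauliX).trace.re = 2 * (σ 0 1).re := by
    simp [Matrix.trace, Matrix.mul_apply, pauliX, Fin.sum_univ_two, h10]
    ring
  have hY : (σ * pauliY).trace.re = -2 * (σ 0 1).im := by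
    simp [Matrix.trace, Matrix.mul_apply, pauliY, Fin.sum_univ_two, h10]
    ring
  rw [hX, hY]
  set u : ℝ := (σ 0 1).re ^ 2 + (σ 0 1).im ^ 2 with hu_def
  have hu : 0 ≤ u := by positivity
  have htu : u ≤ (σ 1 1).re := by nlinarith [key 1, mul_nonneg hu hd1]
  have h2 : 0 ≤ (σ 1 1).re * (1 - 4 * u) := by nlinarith [key 2]
  have h4 : 4 * u ≤ 1 := by nlinarith [h2, htu, hu, mul_nonneg hu hu]
  nlinarith [h4]

set_option maxHeartbeats 1000000 in
lemma lemB {σ : Matrix (Fin 2 → Fin 2) (Fin 2 → Fin 2) ℂ} (hσ : σ.PosSemidef)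
    (htr : σ.trace = 1) :
    ∑ g : Fin 2 → Fin 2, ((σ * kron2 fun m => xy (g m)).trace.re) ^ 2 ≤ 2 := by
  have hherm : σᴴ = σ := hσ.isHermitian
  set b : (Fin 2 → Fin 2) → ℝ := fun g => ((σ * kron2 fun m => xy (g m)).trace).re with hb
  set T : ℝ := ∑ g, (b g) ^ 2 with hT
  show T ≤ 2
  have hreal : ∀ g, (σ * kron2 fun m => xy (g m)).trace = ((b g : ℝ) : ℂ) := fun g =>
    trace_herm_re σ _ hherm (Sg_herm g)
  set M : Matrix (Fin 2 → Fin 2) (Fin 2 → Fin 2) ℂ :=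
    ∑ g, ((b g : ℝ) : ℂ) • kron2 fun m => xy (g m) with hM
  have hMherm : Mᴴ = M := by
    rw [hM, conjTranspose_sum]
    refine Finset.sum_congr rfl fun g _ => ?_
    rw [conjTranspose_smul, Sg_herm]
    simp [Complex.star_def, Complex.conj_ofReal]
  have htrM : (σ * M).trace = ((T : ℝ) : ℂ) := by
    rw [hM, Finset.mul_sum, trace_sum]
    simp only [Matrix.mul_smul, trace_smul, hreal, smul_eq_mul]
    rw [hT]
    push_cast
    exact Finset.sum_congr rfl fun g _ => (sq (b g : ℂ)).symm ▸ by ring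
  set d : ℝ := 2 * (b ![0,1] * b ![1,0] - b ![0,0] * b ![1,1]) with hd
  have hMM : M * M = ((T : ℝ) : ℂ) • (1 : Matrix (Fin 2 → Fin 2) (Fin 2 → Fin 2) ℂ)
      + ((d : ℝ) : ℂ) • kron2 ![pauliZ, pauliZ] := by
    rw [hM, pauli2_sq (fun g => ((b g : ℝ) : ℂ))]
    congr 1
    · congr 1
      rw [hT]; push_cast; rfl
    · congr 1
      rw [hd]; push_cast; ring
  set z : ℝ := ((σ * kron2 ![pauliZ, pauliZ]).trace).re with hz
  have e1 : (σ * kron2 ![pauliZ, pauliZ]).trace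
      = σ ![0,0] ![0,0] - σ ![0,1] ![0,1] - σ ![1,0] ![1,0] + σ ![1,1] ![1,1] := by
    simp only [Matrix.trace, Matrix.diag, Matrix.mul_apply, kron2, Matrix.of_apply,
      sum_pi2, pauliZ]
    norm_num
    ring
  have e2 : (σ ![0,0] ![0,0]).re + (σ ![0,1] ![0,1]).re + (σ ![1,0] ![1,0]).re
      + (σ ![1,1] ![1,1]).re = 1 := by
    have h1 : (σ.trace).re = 1 := by rw [htr]; norm_num
    rw [Matrix.trace] at h1
    rw [show (∑ i, σ.diag i) = σ ![0,0] ![0,0] + σ ![0,1] ![0,1] + σ ![1,0] ![1,0]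
        + σ ![1,1] ![1,1] from sum_pi2 _] at h1
    simpa using h1
  have c1 := diag_re_nonneg hσ ![0,0]
  have c2 := diag_re_nonneg hσ ![0,1]
  have c3 := diag_re_nonneg hσ ![1,0]
  have c4 := diag_re_nonneg hσ ![1,1]
  have hz1 : z ≤ 1 := by
    rw [hz, e1]; simp only [Complex.add_re, Complex.sub_re]; linarith
  have hz2 : -1 ≤ z := by
    rw [hz, e1]; simp only [Complex.add_re, Complex.sub_re]; linarith
  set N : Matrix (Fin 2 → Fin 2) (Fin 2 → Fin 2) ℂ := M - ((T : ℝ) : ℂ) • 1 with hN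
  have hNherm : Nᴴ = N := by
    rw [hN, conjTranspose_sub, conjTranspose_smul, conjTranspose_one, hMherm]
    simp [Complex.star_def, Complex.conj_ofReal]
  have hvar := trace_mul_conj_nonneg hσ N
  rw [hNherm] at hvar
  have expand : N * N = M * M - ((T : ℝ) : ℂ) • M
      - (((T : ℝ) : ℂ) • M - (((T : ℝ) : ℂ) * ((T : ℝ) : ℂ)) • (1 : Matrix (Fin 2 → Fin 2) (Fin 2 → Fin 2) ℂ)) := by
    rw [hN]
    simp only [sub_mul, mul_sub, smul_sub, smul_mul_assoc, mul_smul_comm, smul_smul,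
      one_mul, mul_one]
  have htrNN : ((σ * (N * N)).trace).re = T + d * z - T ^ 2 := by
    rw [expand, hMM]
    simp only [Matrix.mul_sub, Matrix.mul_add, Matrix.mul_smul, Matrix.mul_one,
      trace_sub, trace_add, trace_smul]
    rw [htrM, htr]
    simp only [smul_eq_mul, Complex.sub_re, Complex.add_re, Complex.mul_re, mul_one,
      Complex.ofReal_re, Complex.ofReal_im, Complex.one_re, Complex.one_im, ← hz]
    rw [hd]
    ring
  rw [htrNN] at hvar
  have hTnn : 0 ≤ T := by
    rw [hT]; exact Finset.sum_nonneg fun g _ => sq_nonneg _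
  have hTd1 : d ≤ T := by
    rw [hT, hd, sum_pi2 (fun g => b g ^ 2)]
    nlinarith [sq_nonneg (b ![0,1] - b ![1,0]), sq_nonneg (b ![0,0] + b ![1,1])]
  have hTd2 : -T ≤ d := by
    rw [hT, hd, sum_pi2 (fun g => b g ^ 2)]
    nlinarith [sq_nonneg (b ![0,1] + b ![1,0]), sq_nonneg (b ![0,0] - b ![1,1])]
  have hdz : d * z ≤ T := by
    nlinarith [mul_nonneg (sub_nonneg.2 hTd1) (sub_nonneg.2 hz1),
      mul_nonneg (sub_nonneg.2 (neg_le.1 hTd2)) (sub_nonneg.2 (neg_le.1 hz2))]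
  nlinarith [hvar, hdz, hTnn, sq_nonneg (T - 2)]

lemma jensen_sq {K : ℕ} (p : Fin K → ℝ) (hp : ∀ k, 0 ≤ p k) (hp1 : ∑ k, p k = 1)
    (t : Fin K → ℝ) : (∑ k, p k * t k) ^ 2 ≤ ∑ k, p k * t k ^ 2 := by
  have h := Finset.sum_mul_sq_le_sq_mul_sq Finset.univ (fun k => Real.sqrt (p k))
    (fun k => Real.sqrt (p k) * t k)
  have e1 : ∀ k : Fin K, Real.sqrt (p k) * (Real.sqrt (p k) * t k) = p k * t k := by
    intro k; rw [← mul_assoc, Real.mul_self_sqrt (hp k)]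
  have e2 : ∀ k : Fin K, Real.sqrt (p k) ^ 2 = p k := fun k => Real.sq_sqrt (hp k)
  have e3 : ∀ k : Fin K, (Real.sqrt (p k) * t k) ^ 2 = p k * t k ^ 2 := by
    intro k; rw [mul_pow, e2]
  simp only [e1, e2, e3] at h
  rw [hp1, one_mul] at h
  exact h

/-- For every 3-qubit state separable with respect to the cut `(A|BC)`,
`Q(ρ) ≤ 2`. -/
theorem three_qubit_cut_A_BC_separable_Q_le_two {K : ℕ}
    (p : Fin K → ℝ) (hp : ∀ k, 0 ≤ p k) (hp1 : ∑ k, p k = 1)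
    (ρA : Fin K → Matrix (Fin 2) (Fin 2) ℂ)
    (ρBC : Fin K → Matrix (Fin 2 → Fin 2) (Fin 2 → Fin 2) ℂ)
    (hρA : ∀ k, IsDensityMatrix (ρA k)) (hρBC : ∀ k, IsDensityMatrix (ρBC k))
    (ρ : Matrix (Fin 3 → Fin 2) (Fin 3 → Fin 2) ℂ)
    (hρ : ∀ i j, ρ i j = ∑ k, (p k : ℂ) *
      (ρA k (i 0) (j 0) * ρBC k (fun m => i m.succ) (fun m => j m.succ))) :
    Q3 ρ ≤ 2 := by
  have hfact : ∀ f : Fin 3 → Fin 2, (ρ * kron3 fun m => xy (f m)).trace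
      = ∑ k, (p k : ℂ) * ((ρA k * xy (f 0)).trace
          * ((ρBC k * kron2 fun m => xy (f m.succ)).trace)) := by
    intro f
    have hρeq : ρ = ∑ k, (p k : ℂ) • Matrix.of (fun i j : Fin 3 → Fin 2 =>
        ρA k (i 0) (j 0) * ρBC k (fun m => i m.succ) (fun m => j m.succ)) := by
      ext i j
      rw [hρ i j]
      simp [Matrix.sum_apply]
    rw [hρeq, Finset.sum_mul, trace_sum]
    refine Finset.sum_congr rfl fun k _ => ?_
    rw [smul_mul_assoc, trace_smul, trace_mul_kron3]
    simp [smul_eq_mul]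
  have haR : ∀ k j, ((ρA k * xy j).trace) = (((ρA k * xy j).trace.re : ℝ) : ℂ) :=
    fun k j => trace_herm_re _ _ (hρA k).1.isHermitian (xy_herm j)
  have hbR : ∀ k (g : Fin 2 → Fin 2), ((ρBC k * kron2 fun m => xy (g m)).trace)
      = ((((ρBC k * kron2 fun m => xy (g m)).trace.re : ℝ)) : ℂ) :=
    fun k g => trace_herm_re _ _ (hρBC k).1.isHermitian (Sg_herm g)
  have hre : ∀ f : Fin 3 → Fin 2, (ρ * kron3 fun m => xy (f m)).trace.re
      = ∑ k, p k * (((ρA k * xy (f 0)).trace.re)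
          * ((ρBC k * kron2 fun m => xy (f m.succ)).trace.re)) := by
    intro f
    rw [hfact f, Complex.re_sum]
    refine Finset.sum_congr rfl fun k _ => ?_
    rw [haR k (f 0), hbR k (fun m => f m.succ)]
    simp [← Complex.ofReal_mul]
  have hQ : Q3 ρ = ∑ f : Fin 3 → Fin 2, (∑ k, p k * (((ρA k * xy (f 0)).trace.re)
      * ((ρBC k * kron2 fun m => xy (f m.succ)).trace.re))) ^ 2 := by
    unfold Q3
    exact Finset.sum_congr rfl fun f _ => by rw [hre f]
  have hsplit : ∀ k, (∑ f : Fin 3 → Fin 2, (((ρA k * xy (f 0)).trace.re)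
        * ((ρBC k * kron2 fun m => xy (f m.succ)).trace.re)) ^ 2)
      = (∑ j : Fin 2, ((ρA k * xy j).trace.re) ^ 2)
        * (∑ g : Fin 2 → Fin 2, ((ρBC k * kron2 fun m => xy (g m)).trace.re) ^ 2) := by
    intro k
    rw [sum_pi3, Fin.sum_univ_two, sum_pi2]
    simp only [tail3, Matrix.cons_val_zero]
    norm_num
    ring
  have hbound : ∀ k, (∑ f : Fin 3 → Fin 2, (((ρA k * xy (f 0)).trace.re)
      * ((ρBC k * kron2 fun m => xy (f m.succ)).trace.re)) ^ 2) ≤ 2 := by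
    intro k
    rw [hsplit k]
    have hA2 : (∑ j : Fin 2, ((ρA k * xy j).trace.re) ^ 2) ≤ 1 := by
      rw [Fin.sum_univ_two, show xy 0 = pauliX from rfl, show xy 1 = pauliY from rfl]
      exact lemA (hρA k).1 (hρA k).2
    have hB2 : (∑ g : Fin 2 → Fin 2, ((ρBC k * kron2 fun m => xy (g m)).trace.re) ^ 2) ≤ 2 :=
      lemB (hρBC k).1 (hρBC k).2
    have hBnn : 0 ≤ ∑ g : Fin 2 → Fin 2, ((ρBC k * kron2 fun m => xy (g m)).trace.re) ^ 2 :=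
      Finset.sum_nonneg fun g _ => sq_nonneg _
    calc (∑ j : Fin 2, ((ρA k * xy j).trace.re) ^ 2)
          * (∑ g : Fin 2 → Fin 2, ((ρBC k * kron2 fun m => xy (g m)).trace.re) ^ 2)
        ≤ 1 * 2 := mul_le_mul hA2 hB2 hBnn zero_le_one
      _ = 2 := one_mul 2
  rw [hQ]
  calc (∑ f : Fin 3 → Fin 2, (∑ k, p k * (((ρA k * xy (f 0)).trace.re)
      * ((ρBC k * kron2 fun m => xy (f m.succ)).trace.re))) ^ 2)
      ≤ ∑ f : Fin 3 → Fin 2, ∑ k, p k * ((((ρA k * xy (f 0)).trace.re)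
          * ((ρBC k * kron2 fun m => xy (f m.succ)).trace.re))) ^ 2 :=
        Finset.sum_le_sum fun f _ => jensen_sq p hp hp1 _
    _ = ∑ k, ∑ f : Fin 3 → Fin 2, p k * ((((ρA k * xy (f 0)).trace.re)
          * ((ρBC k * kron2 fun m => xy (f m.succ)).trace.re))) ^ 2 := Finset.sum_comm
    _ = ∑ k, p k * ∑ f : Fin 3 → Fin 2, ((((ρA k * xy (f 0)).trace.re)
          * ((ρBC k * kron2 fun m => xy (f m.succ)).trace.re))) ^ 2 := by
        exact Finset.sum_congr rfl fun k _ => (Finset.mul_sum _ _ _).symm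
    _ ≤ ∑ k, p k * 2 :=
        Finset.sum_le_sum fun k _ => mul_le_mul_of_nonneg_left (hbound k) (hp k)
    _ = 2 := by rw [← Finset.sum_mul, hp1, one_mul]
end
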